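/- Let I be a nonempty finite type and u, v : I → ℝ strictly positive functions. Then ( Σ_{i ∈ I} |u(i) − v(i)| )² ≤ ( Σ_{i ∈ I} max(u(i), v(i)) ) · ( Σ_{i ∈ I} (u(i) − v(i))(log u(i) − log v(i)) ). -/

import Mathlib

lemma pointwise_key {x y : ℝ} (hx : 0 < x) (hy : 0 < y) (hxy : y ≤ x) :
    (x - y) ^ 2 / max x y ≤ (x - y) * (Real.log x - Real.log y) := by
  rw [max_eq_left hxy]
  have hlog : (x - y) / x ≤ Real.log x - Real.log y := by
    have h := Real.log_le_sub_one_of_pos (div_pos hy hx)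
    rw [Real.log_div hy.ne' hx.ne'] at h
    have : y / x - 1 = -((x - y) / x) := by field_simp; ring
    linarith
  have hd : 0 ≤ x - y := by linarith
  calc (x - y) ^ 2 / x = (x - y) * ((x - y) / x) := by ring
    _ ≤ (x - y) * (Real.log x - Real.log y) := by
        exact mul_le_mul_of_nonneg_left hlog hd

lemma pointwise_key' {x y : ℝ} (hx : 0 < x) (hy : 0 < y) :
    (x - y) ^ 2 / max x y ≤ (x - y) * (Real.log x - Real.log y) := by
  rcases le_total y x with h | h
  · exact pointwise_key hx hy h
  · have := pointwise_key hy hx h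
    calc (x - y) ^ 2 / max x y = (y - x) ^ 2 / max y x := by rw [max_comm]; ring_nf
      _ ≤ (y - x) * (Real.log y - Real.log x) := this
      _ = (x - y) * (Real.log x - Real.log y) := by ring

/-- Pinsker-type inequality: for strictly positive `u, v : I → ℝ` on a nonempty
finite type, `(Σ |u − v|)² ≤ (Σ max(u,v)) · Σ (u − v)(log u − log v)`. -/
theorem pinsker_type_inequality {I : Type*} [Fintype I] [Nonempty I]
    (u v : I → ℝ) (hu : ∀ i, 0 < u i) (hv : ∀ i, 0 < v i) :
    (∑ i : I, |u i - v i|) ^ 2 ≤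
      (∑ i : I, max (u i) (v i)) *
        ∑ i : I, (u i - v i) * (Real.log (u i) - Real.log (v i)) := by
  have hm : ∀ i, 0 < max (u i) (v i) := fun i => lt_max_of_lt_left (hu i)
  set f : I → ℝ := fun i => Real.sqrt (max (u i) (v i)) with hf
  set g : I → ℝ := fun i => |u i - v i| / Real.sqrt (max (u i) (v i)) with hg
  have key : (∑ i : I, f i * g i) ^ 2 ≤ (∑ i : I, f i ^ 2) * ∑ i : I, g i ^ 2 :=
    Finset.sum_mul_sq_le_sq_mul_sq Finset.univ f g
  have h1 : ∀ i, f i * g i = |u i - v i| := by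
    intro i
    have hs : Real.sqrt (max (u i) (v i)) ≠ 0 :=
      (Real.sqrt_pos.mpr (hm i)).ne'
    show Real.sqrt (max (u i) (v i)) * (|u i - v i| / Real.sqrt (max (u i) (v i))) = _
    field_simp
  have h2 : ∀ i, f i ^ 2 = max (u i) (v i) := fun i =>
    Real.sq_sqrt (hm i).le
  have h3 : ∀ i, g i ^ 2 = (u i - v i) ^ 2 / max (u i) (v i) := by
    intro i
    rw [hg, div_pow, Real.sq_sqrt (hm i).le, sq_abs]
  calc (∑ i : I, |u i - v i|) ^ 2 = (∑ i : I, f i * g i) ^ 2 := by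
        simp_rw [h1]
    _ ≤ (∑ i : I, f i ^ 2) * ∑ i : I, g i ^ 2 := key
    _ = (∑ i : I, max (u i) (v i)) * ∑ i : I, (u i - v i) ^ 2 / max (u i) (v i) := by
        simp_rw [h2, h3]
    _ ≤ (∑ i : I, max (u i) (v i)) *
          ∑ i : I, (u i - v i) * (Real.log (u i) - Real.log (v i)) := by
        apply mul_le_mul_of_nonneg_left
        · exact Finset.sum_le_sum fun i _ => pointwise_key' (hu i) (hv i)
        · exact Finset.sum_nonneg fun i _ => (hm i).le
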